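/- Let (G,w) be an ASHG, 𝒫 a partition of V(G), and let 𝒫' be the refinement of 𝒫 obtained by replacing each part P ∈ 𝒫 by the vertex sets of the connected components of the induced subgraph G[P]. Then ut_{𝒫'}(u) = ut_𝒫(u) for every u ∈ V(G); consequently a set X is a blocking coalition for 𝒫 if and only if X is a blocking coalition for 𝒫', and 𝒫 is core stable (respectively k-core stable) if and only if 𝒫' is core stable (respectively k-core stable). -/

import Mathlib

open Finset

noncomputable section
open scoped Classical

variable {V : Type*}

/-- The utility of agent `u` in the coalition `X`: the sum of the weights of the
edges joining `u` to members of `X`. -/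
def ut (G : SimpleGraph V) (w : V → V → ℚ) (X : Finset V) (u : V) : ℚ :=
  ∑ v ∈ X.filter (fun v => G.Adj u v), w u v

/-- `P` encodes a partition of the vertex set: `P u` is the part containing `u`. -/
def IsPartitionFun (P : V → Finset V) : Prop :=
  (∀ u, u ∈ P u) ∧ ∀ u v, v ∈ P u → P v = P u

/-- `X` is a blocking coalition for the partition `P`. -/
def Blocking (G : SimpleGraph V) (w : V → V → ℚ) (P : V → Finset V)
    (X : Finset V) : Prop :=
  X.Nonempty ∧ ∀ u ∈ X, ut G w (P u) u < ut G w X u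

/-- The partition `P` is core stable: it admits no blocking coalition. -/
def CoreStable (G : SimpleGraph V) (w : V → V → ℚ) (P : V → Finset V) : Prop :=
  ∀ X : Finset V, ¬ Blocking G w P X

/-- The partition `P` is `k`-core stable: it admits no blocking coalition of size at most `k`. -/
def KCoreStable (k : ℕ) (G : SimpleGraph V) (w : V → V → ℚ) (P : V → Finset V) : Prop :=
  ∀ X : Finset V, X.card ≤ k → ¬ Blocking G w P X

/-- The subgraph of `G` induced by the vertex set `X`, viewed as a graph on
the full vertex set (vertices outside `X` are isolated). -/
def restrict (G : SimpleGraph V) (X : Finset V) : SimpleGraph V where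
  Adj a b := G.Adj a b ∧ a ∈ X ∧ b ∈ X
  symm := by
    constructor
    rintro a b ⟨h, ha, hb⟩
    exact ⟨h.symm, hb, ha⟩
  loopless := by
    constructor
    rintro a ⟨h, -, -⟩
    exact G.loopless.irrefl a h

/-- replacing every part of a partition by the connected components of the
subgraph it induces does not change any utility; hence blocking coalitions, core
stability and `k`-core stability are unaffected. -/
theorem refinement_into_components [Fintype V] (G : SimpleGraph V) (w : V → V → ℚ)
    (hw : ∀ u v, w u v = w v u)
    (P : V → Finset V) (hP : IsPartitionFun P)
    (P' : V → Finset V)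
    (hP' : ∀ u, P' u = (P u).filter (fun v => (restrict G (P u)).Reachable u v)) :
    IsPartitionFun P' ∧
    (∀ u, ut G w (P' u) u = ut G w (P u) u) ∧
    (∀ X : Finset V, Blocking G w P X ↔ Blocking G w P' X) ∧
    (CoreStable G w P ↔ CoreStable G w P') ∧
    (∀ k : ℕ, KCoreStable k G w P ↔ KCoreStable k G w P') := by
  have key : ∀ u, (P' u).filter (fun v => G.Adj u v) = (P u).filter (fun v => G.Adj u v) := by
    intro u
    ext v
    simp only [hP', mem_filter]
    constructor
    · rintro ⟨⟨hv, -⟩, ha⟩; exact ⟨hv, ha⟩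
    · rintro ⟨hv, ha⟩
      exact ⟨⟨hv, SimpleGraph.Adj.reachable ⟨ha, hP.1 u, hv⟩⟩, ha⟩
  have hut : ∀ u, ut G w (P' u) u = ut G w (P u) u := by
    intro u; unfold ut; rw [key u]
  refine ⟨⟨?_, ?_⟩, hut, ?_, ?_, ?_⟩
  · intro u
    rw [hP']
    exact mem_filter.2 ⟨hP.1 u, SimpleGraph.Reachable.refl u⟩
  · intro u v hv
    rw [hP'] at hv
    obtain ⟨hvP, hreach⟩ := mem_filter.1 hv
    have hPv : P v = P u := hP.2 u v hvP
    rw [hP', hP', hPv]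
    ext x
    simp only [mem_filter, and_congr_right_iff]
    intro _
    exact ⟨fun h => hreach.trans h, fun h => hreach.symm.trans h⟩
  · intro X
    simp only [Blocking, hut]
  · constructor <;> intro h X hb <;> exact h X (by simpa only [Blocking, hut] using hb)
  · intro k
    constructor <;> intro h X hc hb <;> exact h X hc (by simpa only [Blocking, hut] using hb)
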